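/- For the binary WOM with t writes, the point (R_1,...,R_t) with R_l = α_{l−1}·h(ε_l) for l < t and R_t = α_{t−1}, where α_l = ∏_{j=1}^{l}(1−ε_j), satisfies ∑_{l=1}^t R_l ≤ log₂(t+1); moreover this bound is attained with the choice ε_l = 1/(t − l + 2). -/

import Mathlib

open Finset

private lemma log_ge_one_sub_inv (z : ℝ) (hz : 0 < z) : 1 - z⁻¹ ≤ Real.log z := by
  have h := Real.log_le_sub_one_of_pos (inv_pos.mpr hz)
  rw [Real.log_inv] at h
  linarith

private lemma keylog (x k : ℝ) (hx0 : 0 < x) (hx1 : x < 1) (hk : 0 < k) :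
    -(x * Real.log x) - (1 - x) * Real.log (1 - x) + (1 - x) * Real.log k
      ≤ Real.log (k + 1) := by
  have h1x : 0 < 1 - x := by linarith
  have hk1 : 0 < k + 1 := by linarith
  have A := log_ge_one_sub_inv ((k + 1) * x) (by positivity)
  have B := log_ge_one_sub_inv ((k + 1) * (1 - x) / k) (by positivity)
  rw [Real.log_mul (ne_of_gt hk1) (ne_of_gt hx0)] at A
  rw [Real.log_div (by positivity) (ne_of_gt hk),
      Real.log_mul (ne_of_gt hk1) (ne_of_gt h1x)] at B
  have A' : x - 1 / (k + 1) ≤ x * Real.log (k + 1) + x * Real.log x := by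
    have h2 := mul_le_mul_of_nonneg_left A hx0.le
    have h3 : x * (1 - ((k + 1) * x)⁻¹) = x - 1 / (k + 1) := by
      field_simp
    nlinarith [h2, h3]
  have B' : (1 - x) - k / (k + 1)
      ≤ (1 - x) * Real.log (k + 1) + (1 - x) * Real.log (1 - x)
        - (1 - x) * Real.log k := by
    have h2 := mul_le_mul_of_nonneg_left B h1x.le
    have h3 : (1 - x) * (1 - ((k + 1) * (1 - x) / k)⁻¹) = (1 - x) - k / (k + 1) := by
      field_simp
    nlinarith [h2, h3]
  have hsum : 1 / (k + 1) + k / (k + 1) = 1 := by field_simp; try ring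
  nlinarith [A', B', hsum]

private lemma key_logb (x k : ℝ) (hx0 : 0 ≤ x) (hx1 : x ≤ 1 / 2) (hk : 1 ≤ k) :
    -(x * Real.logb 2 x) - (1 - x) * Real.logb 2 (1 - x) + (1 - x) * Real.logb 2 k
      ≤ Real.logb 2 (k + 1) := by
  have hL : 0 < Real.log 2 := Real.log_pos (by norm_num)
  rcases eq_or_lt_of_le hx0 with h0 | h0
  · simp only [← h0, zero_mul, neg_zero, sub_zero, one_mul, Real.logb_one, zero_sub,
      neg_zero, zero_add]
    have : Real.logb 2 k ≤ Real.logb 2 (k + 1) :=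
      Real.logb_le_logb_of_le (by norm_num) (by linarith) (by linarith)
    linarith [this]
  · have hx1' : x < 1 := by linarith
    have hk0 : 0 < k := by linarith
    have key := keylog x k h0 hx1' hk0
    simp only [Real.logb]
    rw [show -(x * (Real.log x / Real.log 2)) - (1 - x) * (Real.log (1 - x) / Real.log 2)
          + (1 - x) * (Real.log k / Real.log 2)
        = (-(x * Real.log x) - (1 - x) * Real.log (1 - x) + (1 - x) * Real.log k)
            / Real.log 2 from by ring]
    exact div_le_div_of_nonneg_right key hL.le

private lemma eq_step (k : ℝ) (hk : 0 < k) :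
    -(1 / (k + 1) * Real.logb 2 (1 / (k + 1)))
      - (1 - 1 / (k + 1)) * Real.logb 2 (1 - 1 / (k + 1))
      + (1 - 1 / (k + 1)) * Real.logb 2 k = Real.logb 2 (k + 1) := by
  have hk1 : (0:ℝ) < k + 1 := by linarith
  have h1 : (1:ℝ) - 1 / (k + 1) = k / (k + 1) := by field_simp; ring
  have h2 : Real.logb 2 (1 / (k + 1)) = -Real.logb 2 (k + 1) := by
    rw [one_div, Real.logb_inv]
  have h3 : Real.logb 2 (k / (k + 1)) = Real.logb 2 k - Real.logb 2 (k + 1) :=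
    Real.logb_div (ne_of_gt hk) (ne_of_gt hk1)
  rw [h1, h2, h3]
  have hs : 1 / (k + 1) + k / (k + 1) = 1 := by field_simp; try ring
  linear_combination Real.logb 2 (k + 1) * hs

private lemma rec_formula (binH : ℝ → ℝ) (ε : ℕ → ℝ) (n : ℕ) :
    (∑ l ∈ range (n + 1), (∏ j ∈ range l, (1 - ε j)) * binH (ε l))
        + (∏ j ∈ range (n + 1), (1 - ε j))
    = binH (ε 0) + (1 - ε 0) *
        ((∑ l ∈ range n, (∏ j ∈ range l, (1 - ε (j + 1))) * binH (ε (l + 1)))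
          + (∏ j ∈ range n, (1 - ε (j + 1)))) := by
  have hsum : ∑ i ∈ range n, (∏ j ∈ range (i + 1), (1 - ε j)) * binH (ε (i + 1))
      = (1 - ε 0) * ∑ i ∈ range n, (∏ j ∈ range i, (1 - ε (j + 1))) * binH (ε (i + 1)) := by
    rw [Finset.mul_sum]
    exact Finset.sum_congr rfl fun i _ => by rw [Finset.prod_range_succ']; ring
  rw [Finset.sum_range_succ', Finset.prod_range_succ', hsum]
  simp [Finset.prod_range_zero]
  ring

private lemma main_le (binH : ℝ → ℝ)
    (hbinH : ∀ x, binH x = -(x * Real.logb 2 x) - (1 - x) * Real.logb 2 (1 - x)) :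
    ∀ n (ε : ℕ → ℝ), (∀ l, l < n → 0 ≤ ε l ∧ ε l ≤ 1 / 2) →
    (∑ l ∈ range n, (∏ j ∈ range l, (1 - ε j)) * binH (ε l))
        + (∏ j ∈ range n, (1 - ε j)) ≤ Real.logb 2 (n + 2) := by
  intro n
  induction n with
  | zero =>
    intro ε _
    simp [Real.logb_self_eq_one]
  | succ n ih =>
    intro ε hε
    rw [rec_formula]
    have h0 := hε 0 (Nat.succ_pos n)
    have hIH := ih (fun l => ε (l + 1)) (fun l hl => hε (l + 1) (by omega))
    have h1 : (1 : ℝ) - ε 0 ≥ 0 := by linarith [h0.2]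
    have step := key_logb (ε 0) ((n : ℝ) + 2) h0.1 h0.2 (by have := Nat.cast_nonneg (α := ℝ) n; linarith)
    rw [hbinH]
    have : (1 - ε 0) * ((∑ l ∈ range n, (∏ j ∈ range l, (1 - ε (j + 1))) * binH (ε (l + 1)))
          + (∏ j ∈ range n, (1 - ε (j + 1)))) ≤ (1 - ε 0) * Real.logb 2 (n + 2) :=
      mul_le_mul_of_nonneg_left hIH h1
    have hcast : ((n : ℝ) + 1) + 2 = ((n : ℝ) + 2) + 1 := by ring
    push_cast
    rw [hcast]
    linarith [step, this]

private lemma main_eq (binH : ℝ → ℝ)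
    (hbinH : ∀ x, binH x = -(x * Real.logb 2 x) - (1 - x) * Real.logb 2 (1 - x)) :
    ∀ n (ε : ℕ → ℝ), (∀ l, l < n → ε l = 1 / ((n : ℝ) - l + 2)) →
    (∑ l ∈ range n, (∏ j ∈ range l, (1 - ε j)) * binH (ε l))
        + (∏ j ∈ range n, (1 - ε j)) = Real.logb 2 (n + 2) := by
  intro n
  induction n with
  | zero =>
    intro ε _
    simp [Real.logb_self_eq_one]
  | succ n ih =>
    intro ε hε
    rw [rec_formula]
    have hIH : (∑ l ∈ range n, (∏ j ∈ range l, (1 - ε (j + 1))) * binH (ε (l + 1)))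
        + (∏ j ∈ range n, (1 - ε (j + 1))) = Real.logb 2 (n + 2) := by
      apply ih
      intro l hl
      have := hε (l + 1) (by omega)
      rw [this]
      push_cast
      ring_nf
    have h0 : ε 0 = 1 / (((n : ℝ) + 2) + 1) := by
      have := hε 0 (Nat.succ_pos n)
      rw [this]
      push_cast
      ring_nf
    rw [hIH, hbinH, h0]
    have hstep := eq_step ((n : ℝ) + 2) (by positivity)
    push_cast
    rw [show ((n : ℝ) + 1) + 2 = ((n : ℝ) + 2) + 1 from by ring]
    linarith [hstep]

/-- For the binary `t`-write WOM, the rate point `R_l = α_{l−1} h(ε_l)` (`l < t`),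
`R_t = α_{t−1}`, where `α_l = ∏_{j=1}^l (1−ε_j)`, satisfies `∑ R_l ≤ log₂(t+1)`,
with equality attained by the choice `ε_l = 1/(t − l + 2)`.
(Indices are shifted to start at 0: `ε l` below is `ε_{l+1}` of the paper.) -/
theorem stmt_9 (t : ℕ) (ht : 1 ≤ t) (ε : ℕ → ℝ)
    (hε : ∀ l, l < t → 0 ≤ ε l ∧ ε l ≤ 1 / 2) (hlast : ε (t - 1) = 1 / 2)
    (binH : ℝ → ℝ)
    (hbinH : ∀ x, binH x = -(x * Real.logb 2 x) - (1 - x) * Real.logb 2 (1 - x)) :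
    (∑ l ∈ range (t - 1), (∏ j ∈ range l, (1 - ε j)) * binH (ε l))
        + (∏ j ∈ range (t - 1), (1 - ε j)) ≤ Real.logb 2 (t + 1) ∧
    ((∀ l, l < t → ε l = 1 / ((t : ℝ) - l + 1)) →
      (∑ l ∈ range (t - 1), (∏ j ∈ range l, (1 - ε j)) * binH (ε l))
          + (∏ j ∈ range (t - 1), (1 - ε j)) = Real.logb 2 (t + 1)) := by
  obtain ⟨n, rfl⟩ : ∃ n, t = n + 1 := ⟨t - 1, by omega⟩
  have hn : n + 1 - 1 = n := rfl
  have hcast : ((n : ℝ) + 1) + 1 = (n : ℝ) + 2 := by ring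
  constructor
  · have := main_le binH hbinH n ε (fun l hl => hε l (by omega))
    rw [hn]
    push_cast
    rw [hcast]
    exact this
  · intro heq
    have := main_eq binH hbinH n ε (fun l hl => by
      have h := heq l (by omega)
      rw [h]; push_cast; ring_nf)
    rw [hn]
    push_cast
    rw [hcast]
    exact this
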